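/- Let v₀, v₁, ..., v_R be reals (R ≥ 1) all in an interval [m, M], and suppose v_{R-r*} = w for some 0 ≤ r* ≤ R-1. Define u = v₀/2^R + ∑_{r=0}^{R-1} v_{R-r}/2^(r+1). If R ≤ n, then m + (w - m)/2^n ≤ u ≤ M - (M - w)/2^n. -/

import Mathlib

lemma geo_half (R : ℕ) : ∑ r ∈ Finset.range R, (1:ℝ)/2^(r+1) = 1 - 1/2^R := by
  induction R with
  | zero => simp
  | succ k ih =>
    rw [Finset.sum_range_succ, ih, pow_succ]
    field_simp
    ring

theorem stmt_12 (R n : ℕ) (hR : 1 ≤ R) (hRn : R ≤ n)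
    (v : ℕ → ℝ) (m M w : ℝ)
    (hrange : ∀ i ≤ R, m ≤ v i ∧ v i ≤ M)
    (rstar : ℕ) (hrstar : rstar ≤ R - 1) (hw : v (R - rstar) = w)
    (u : ℝ)
    (hu : u = v 0 / 2 ^ R + ∑ r ∈ Finset.range R, v (R - r) / 2 ^ (r + 1)) :
    m + (w - m) / 2 ^ n ≤ u ∧ u ≤ M - (M - w) / 2 ^ n := by
  have hrR : rstar < R := by omega
  have hmem : rstar ∈ Finset.range R := Finset.mem_range.mpr hrR
  have hwm : m ≤ w := by rw [← hw]; exact (hrange (R - rstar) (by omega)).1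
  have hwM : w ≤ M := by rw [← hw]; exact (hrange (R - rstar) (by omega)).2
  have hpow : (2:ℝ)^(rstar+1) ≤ 2^n := by
    apply pow_le_pow_right₀ (by norm_num); omega
  have hpos : (0:ℝ) < 2^(rstar+1) := by positivity
  have hmR : ∀ c : ℝ, ∑ r ∈ Finset.range R, c/(2:ℝ)^(r+1) = c * (1 - 1/2^R) := by
    intro c
    rw [Finset.sum_congr rfl (fun r _ => div_eq_mul_one_div c ((2:ℝ)^(r+1))),
      ← Finset.mul_sum, geo_half]
  have h0 := hrange 0 (by omega)
  constructor
  · -- lower bound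
    have hsum : ∑ r ∈ Finset.range R,
        (m/2^(r+1) + (if r = rstar then (w-m)/2^(r+1) else 0))
        ≤ ∑ r ∈ Finset.range R, v (R - r) / 2 ^ (r + 1) := by
      apply Finset.sum_le_sum
      intro r hr
      have h1 : m ≤ v (R - r) := (hrange (R - r) (by omega)).1
      by_cases h : r = rstar
      · subst h
        rw [if_pos rfl, ← add_div, hw,
          div_le_div_iff_of_pos_right (show (0:ℝ) < 2^(r+1) by positivity)]
        linarith
      · simp only [if_neg h, add_zero]
        gcongr
    have hsplit : ∑ r ∈ Finset.range R,
        (m/2^(r+1) + (if r = rstar then (w-m)/2^(r+1) else 0))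
        = m * (1 - 1/2^R) + (w-m)/2^(rstar+1) := by
      rw [Finset.sum_add_distrib, Finset.sum_ite_eq' (Finset.range R) rstar, if_pos hmem,
        hmR]
    have hv0 : m / 2^R ≤ v 0 / 2^R := by gcongr; exact h0.1
    have hlast : (w - m)/2^n ≤ (w - m)/2^(rstar+1) :=
      div_le_div_of_nonneg_left (by linarith) hpos hpow
    have hRpos : (0:ℝ) < 2^R := by positivity
    rw [hu]
    have : m + (w-m)/2^(rstar+1) = m/2^R + (m * (1 - 1/2^R) + (w-m)/2^(rstar+1)) := by
      field_simp; ring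
    nlinarith [hsum, hsplit]
  · -- upper bound
    have hsum : ∑ r ∈ Finset.range R, v (R - r) / 2 ^ (r + 1)
        ≤ ∑ r ∈ Finset.range R,
        (M/2^(r+1) - (if r = rstar then (M-w)/2^(r+1) else 0)) := by
      apply Finset.sum_le_sum
      intro r hr
      have h1 : v (R - r) ≤ M := (hrange (R - r) (by omega)).2
      by_cases h : r = rstar
      · subst h
        rw [if_pos rfl, div_sub_div_same, hw,
          div_le_div_iff_of_pos_right (show (0:ℝ) < 2^(r+1) by positivity)]
        linarith
      · simp only [if_neg h, sub_zero]
        gcongr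
    have hsplit : ∑ r ∈ Finset.range R,
        (M/2^(r+1) - (if r = rstar then (M-w)/2^(r+1) else 0))
        = M * (1 - 1/2^R) - (M-w)/2^(rstar+1) := by
      rw [Finset.sum_sub_distrib, Finset.sum_ite_eq' (Finset.range R) rstar, if_pos hmem,
        hmR]
    have hv0 : v 0 / 2^R ≤ M / 2^R := by gcongr; exact h0.2
    have hlast : (M - w)/2^n ≤ (M - w)/2^(rstar+1) :=
      div_le_div_of_nonneg_left (by linarith) hpos hpow
    have hRpos : (0:ℝ) < 2^R := by positivity
    rw [hu]
    have : M - (M-w)/2^(rstar+1) = M/2^R + (M * (1 - 1/2^R) - (M-w)/2^(rstar+1)) := by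
      field_simp; ring
    nlinarith [hsum, hsplit]
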